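/- Let α ∈ (1,2] and let λ, μ, ν, u, v be complex numbers. Then there exist constants C > 0, θ > 0 and ρ > 0 such that the doubly indexed coefficients satisfy |a_{k,ℓ}| ≤ C·θ^{ℓ}·ρ^{k}·(k − k(ℓ) + 1)^{α/2 − 1}·(max(ℓ,1))^{α/2 − 1} for every ℓ ≥ 0 and every k ≥ k(ℓ). Consequently there exists R > 0 such that for every t ∈ (0,R) the doubly indexed series Σ_{ℓ≥0} Σ_{k≥k(ℓ)} |a_{k,ℓ}| · t^{αk−ℓ} converges. -/

import Mathlib

open Finset

/-- Valuation: `k(0) = k(1) = k(2) = 1` and `k(ℓ) = ℓ` for `ℓ ≥ 3` (case `α ∈ (1,2]`). -/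
def kval (l : ℕ) : ℕ := if l ≤ 2 then 1 else l

/-- The double discrete convolution
`a*²_{m,ℓ} = ∑_{k₁+k₂=m, ℓ₁+ℓ₂=ℓ, kᵢ≥1, ℓᵢ≥0} a_{k₁,ℓ₁} a_{k₂,ℓ₂}`. -/
noncomputable def dconv (a : ℕ → ℕ → ℂ) (m l : ℕ) : ℂ :=
  ∑ k₁ ∈ Finset.Ico 1 m, ∑ l₁ ∈ Finset.range (l + 1), a k₁ l₁ * a (m - k₁) (l - l₁)

/-- The doubly indexed coefficients `a_{k,ℓ}` of the non-homogeneous fractional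
Riccati equation, case `α ∈ (1,2]` with initial conditions `u`, `v`. -/
def IsDoubleRiccatiSeq2 (α : ℝ) (lam mu nu u v : ℂ) (a : ℕ → ℕ → ℂ) : Prop :=
  a 1 0 = nu / (Real.Gamma (α + 1) : ℂ) ∧
  a 1 1 = u / (Real.Gamma α : ℂ) ∧
  a 1 2 = v / (Real.Gamma (α - 1) : ℂ) ∧
  (∀ l : ℕ, 3 ≤ l → a 1 l = 0) ∧
  (∀ k l : ℕ, k < kval l → a k l = 0) ∧
  (∀ l k : ℕ, max (kval l) 2 ≤ k →
    a k l = (mu * a (k - 1) l + lam * dconv a (k - 1) l) *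
      ((Real.Gamma (α * ((k:ℝ) - 1) - (l:ℝ) + 1) / Real.Gamma (α * (k:ℝ) - (l:ℝ) + 1) : ℝ) : ℂ))

/-! ### Auxiliary lemmas -/

lemma invsq_sum (n : ℕ) : ∑ i ∈ Finset.Ico 1 (n+1), (1:ℝ)/(i:ℝ)^2 ≤ 2 - 2/(n+1) := by
  induction n with
  | zero => simp
  | succ n ih =>
    rw [Finset.sum_Ico_succ_top (by omega)]
    have h1 : (0:ℝ) < (n:ℝ) + 1 := by positivity
    have h2 : (0:ℝ) < (n:ℝ) + 2 := by positivity
    have : ((n+1:ℕ):ℝ) = (n:ℝ)+1 := by push_cast; ring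
    rw [this]
    have : ((n:ℝ)+1+1) = (n:ℝ)+2 := by ring
    rw [this]
    have key : 1/((n:ℝ)+1)^2 ≤ 2/((n:ℝ)+1) - 2/((n:ℝ)+2) := by
      rw [div_sub_div _ _ (ne_of_gt h1) (ne_of_gt h2), div_le_div_iff₀ (by positivity) (by positivity)]
      nlinarith [sq_nonneg ((n:ℝ))]
    linarith

lemma invsq_sum' (m : ℕ) : ∑ i ∈ Finset.Ico 1 m, (1:ℝ)/(i:ℝ)^2 ≤ 2 := by
  cases m with
  | zero => simp
  | succ n =>
    have := invsq_sum n
    have h1 : (0:ℝ) < 2/((n:ℝ)+1) := by positivity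
    push_cast at this ⊢
    linarith

lemma reflect_sum (m : ℕ) (f : ℕ → ℝ) :
    ∑ i ∈ Finset.Ico 1 m, f (m - i) = ∑ i ∈ Finset.Ico 1 m, f i := by
  apply Finset.sum_nbij' (fun i => m - i) (fun i => m - i)
  all_goals intro i hi
  all_goals simp only [Finset.mem_Ico] at *
  all_goals omega

lemma sumk (m : ℕ) :
    ∑ i ∈ Finset.Ico 1 m, (1:ℝ)/((i:ℝ)^2 * ((m - i:ℕ):ℝ)^2) ≤ 8/(m:ℝ)^2 := by
  rcases Nat.eq_zero_or_pos m with hm | hm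
  · subst hm; simp
  have hmR : (0:ℝ) < (m:ℝ) := by exact_mod_cast hm
  have step : ∀ i ∈ Finset.Ico 1 m,
      (1:ℝ)/((i:ℝ)^2 * ((m - i:ℕ):ℝ)^2) ≤ 2/(m:ℝ)^2 * (1/(i:ℝ)^2 + 1/((m - i:ℕ):ℝ)^2) := by
    intro i hi
    simp only [Finset.mem_Ico] at hi
    have hA : (0:ℝ) < (i:ℝ) := by exact_mod_cast hi.1
    have hBn : 1 ≤ m - i := by omega
    have hB : (0:ℝ) < ((m-i:ℕ):ℝ) := by exact_mod_cast hBn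
    have hAB : (i:ℝ) + ((m-i:ℕ):ℝ) = (m:ℝ) := by
      have : i + (m - i) = m := by omega
      exact_mod_cast congrArg (Nat.cast (R := ℝ)) this
    set A := (i:ℝ); set B := ((m-i:ℕ):ℝ)
    rw [div_le_iff₀ (by positivity), ← hAB]
    have expand : 2/(A+B)^2 * (1/A^2 + 1/B^2) * (A^2*B^2) = 2*(A^2+B^2)/(A+B)^2 := by
      field_simp; ring
    rw [expand, le_div_iff₀ (by positivity)]
    nlinarith [sq_nonneg (A - B)]
  calc ∑ i ∈ Finset.Ico 1 m, (1:ℝ)/((i:ℝ)^2 * ((m - i:ℕ):ℝ)^2)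
      ≤ ∑ i ∈ Finset.Ico 1 m, 2/(m:ℝ)^2 * (1/(i:ℝ)^2 + 1/((m - i:ℕ):ℝ)^2) :=
        Finset.sum_le_sum step
    _ = 2/(m:ℝ)^2 * ((∑ i ∈ Finset.Ico 1 m, 1/(i:ℝ)^2) + ∑ i ∈ Finset.Ico 1 m, 1/((m - i:ℕ):ℝ)^2) := by
        rw [← Finset.mul_sum, Finset.sum_add_distrib]
    _ ≤ 2/(m:ℝ)^2 * (2 + 2) := by
        have h1 := invsq_sum' m
        have h2 : ∑ i ∈ Finset.Ico 1 m, (1:ℝ)/((m - i:ℕ):ℝ)^2 ≤ 2 := by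
          rw [reflect_sum m (fun j => (1:ℝ)/(j:ℝ)^2)]; exact h1
        have : (0:ℝ) ≤ 2/(m:ℝ)^2 := by positivity
        nlinarith
    _ = 8/(m:ℝ)^2 := by ring

lemma suml (l : ℕ) :
    ∑ j ∈ Finset.range (l+1), (1:ℝ)/(((max j 1:ℕ):ℝ)^2 * ((max (l - j) 1:ℕ):ℝ)^2)
      ≤ 10/((max l 1:ℕ):ℝ)^2 := by
  match l with
  | 0 => norm_num
  | 1 => norm_num [Finset.sum_range_succ]
  | (n+2) =>
    set l := n + 2 with hl
    have hl2 : 2 ≤ l := by omega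
    have hlR : (0:ℝ) < (l:ℝ) := by positivity
    have hmax : max l 1 = l := by omega
    rw [hmax]
    have hsplit : Finset.range (l+1) = insert 0 (insert l (Finset.Ico 1 l)) := by
      ext x; simp [Finset.mem_Ico, Finset.mem_range]; omega
    rw [hsplit, Finset.sum_insert (by simp [Finset.mem_Ico]),
        Finset.sum_insert (by simp [Finset.mem_Ico])]
    have e0 : (1:ℝ)/(((max 0 1:ℕ):ℝ)^2 * ((max (l - 0) 1:ℕ):ℝ)^2) = 1/(l:ℝ)^2 := by
      rw [(by omega : max (0:ℕ) 1 = 1), (by omega : l - 0 = l), hmax]; norm_num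
    have e1 : (1:ℝ)/(((max l 1:ℕ):ℝ)^2 * ((max (l - l) 1:ℕ):ℝ)^2) = 1/(l:ℝ)^2 := by
      rw [hmax, (by omega : l - l = 0)]; norm_num
    rw [e0, e1]
    have emid : ∀ j ∈ Finset.Ico 1 l,
        (1:ℝ)/(((max j 1:ℕ):ℝ)^2 * ((max (l - j) 1:ℕ):ℝ)^2) = 1/((j:ℝ)^2 * ((l - j:ℕ):ℝ)^2) := by
      intro j hj
      simp only [Finset.mem_Ico] at hj
      rw [(by omega : max j 1 = j), (by omega : max (l - j) 1 = l - j)]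
    rw [Finset.sum_congr rfl emid]
    have hs := sumk l
    have haux1 : (8:ℝ)/(l:ℝ)^2 = 8 * (1/(l:ℝ)^2) := by ring
    have haux2 : (10:ℝ)/(l:ℝ)^2 = 10 * (1/(l:ℝ)^2) := by ring
    rw [haux1] at hs
    rw [haux2]
    linarith

lemma gamma_ratio {α x : ℝ} (hα : 1 < α) (hα2 : α ≤ 2) (hx : α - 1 ≤ x) :
    Real.Gamma x / Real.Gamma (x + α) ≤ 3/(α-1) := by
  have hx0 : 0 < x := by linarith
  have hxα : 0 < x + α := by linarith
  have hGx : 0 < Real.Gamma x := Real.Gamma_pos_of_pos hx0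
  have hGxα : 0 < Real.Gamma (x + α) := Real.Gamma_pos_of_pos hxα
  have hconv := Real.convexOn_Gamma.2 (Set.mem_Ioi.mpr hxα)
      (Set.mem_Ioi.mpr (by linarith : (0:ℝ) < x + α + 1))
      (by linarith : (0:ℝ) ≤ α - 1) (by linarith : (0:ℝ) ≤ 2 - α) (by ring)
  have harg : (α-1) • (x+α) + (2-α) • (x+α+1) = x + 2 := by
    simp only [smul_eq_mul]; ring
  rw [harg] at hconv
  simp only [smul_eq_mul] at hconv
  have hG1 : Real.Gamma (x + α + 1) = (x + α) * Real.Gamma (x + α) :=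
    Real.Gamma_add_one (ne_of_gt hxα)
  rw [hG1] at hconv
  have hG2 : Real.Gamma (x + 2) = (x+1) * (x * Real.Gamma x) := by
    have h1 : Real.Gamma (x + 1) = x * Real.Gamma x := Real.Gamma_add_one (ne_of_gt hx0)
    have h2 : Real.Gamma ((x + 1) + 1) = (x+1) * Real.Gamma (x+1) :=
      Real.Gamma_add_one (by positivity)
    rw [(by ring : x + 2 = (x+1)+1), h2, h1]
  rw [hG2] at hconv
  rw [div_le_div_iff₀ hGxα (by linarith)]
  nlinarith [mul_pos hx0 hGx, mul_pos hxα hGxα, sq_nonneg (x - (α-1)),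
    mul_nonneg (mul_nonneg (by linarith : (0:ℝ) ≤ x - (α-1)) hGxα.le) hx0.le,
    mul_nonneg (by linarith : (0:ℝ) ≤ x - (α-1)) hGxα.le]

lemma kval_pos (l : ℕ) : 1 ≤ kval l := by unfold kval; split <;> omega

lemma ratio_bound {α : ℝ} (hα : 1 < α) (hα2 : α ≤ 2) (l k : ℕ) (hk : max (kval l) 2 ≤ k) :
    |Real.Gamma (α*((k:ℝ)-1) - (l:ℝ) + 1) / Real.Gamma (α*(k:ℝ) - (l:ℝ) + 1)| ≤ 3/(α-1) := by
  set x := α*((k:ℝ)-1) - (l:ℝ) + 1 with hxdef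
  have hk2 : 2 ≤ k := le_trans (le_max_right _ _) hk
  have hkR : (2:ℝ) ≤ (k:ℝ) := by exact_mod_cast hk2
  have hx : α - 1 ≤ x := by
    rcases le_or_gt l 2 with h | h
    · have : (l:ℝ) ≤ 2 := by exact_mod_cast h
      rw [hxdef]; nlinarith
    · have hkl : l ≤ k := by
        have h1 : kval l ≤ k := le_trans (le_max_left _ _) hk
        simp only [kval, if_neg (show ¬ l ≤ 2 by omega)] at h1
        exact h1
      have : (l:ℝ) ≤ (k:ℝ) := by exact_mod_cast hkl
      rw [hxdef]; nlinarith
  have harg : α*(k:ℝ) - (l:ℝ) + 1 = x + α := by rw [hxdef]; ring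
  rw [harg]
  have h0 : 0 ≤ Real.Gamma x / Real.Gamma (x+α) :=
    div_nonneg (Real.Gamma_pos_of_pos (by linarith)).le (Real.Gamma_pos_of_pos (by linarith)).le
  rw [abs_of_nonneg h0]
  exact gamma_ratio hα hα2 hx

lemma pow_rpow_ge_one {α : ℝ} (hα : 1 < α) (hα2 : α ≤ 2) (j n : ℕ) (h1 : 1 ≤ n)
    (h2 : (n:ℝ) ≤ ((2:ℝ)^j)^2) :
    1 ≤ (2:ℝ)^j * (n:ℝ)^(α/2-1) := by
  have hn1 : (1:ℝ) ≤ (n:ℝ) := by exact_mod_cast h1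
  have hn0 : (0:ℝ) < (n:ℝ) := by linarith
  have hh : (n:ℝ)^(-(1/2):ℝ) ≤ (n:ℝ)^(α/2-1) :=
    Real.rpow_le_rpow_of_exponent_le hn1 (by linarith)
  have hsq : (n:ℝ)^((1/2):ℝ) ≤ (2:ℝ)^j := by
    rw [← Real.sqrt_eq_rpow]
    calc Real.sqrt (n:ℝ) ≤ Real.sqrt (((2:ℝ)^j)^2) := Real.sqrt_le_sqrt h2
      _ = (2:ℝ)^j := Real.sqrt_sq (by positivity)
  have key : (1:ℝ) ≤ (2:ℝ)^j * (n:ℝ)^(-(1/2):ℝ) := by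
    rw [Real.rpow_neg hn0.le, ← div_eq_mul_inv, le_div_iff₀ (by positivity)]
    simpa using hsq
  calc (1:ℝ) ≤ (2:ℝ)^j * (n:ℝ)^(-(1/2):ℝ) := key
    _ ≤ (2:ℝ)^j * (n:ℝ)^(α/2-1) :=
        mul_le_mul_of_nonneg_left hh (by positivity)

set_option maxHeartbeats 1000000 in
theorem stmt_19 (α : ℝ) (hα : 1 < α) (hα2 : α ≤ 2)
    (lam mu nu u v : ℂ)
    (a : ℕ → ℕ → ℂ) (ha : IsDoubleRiccatiSeq2 α lam mu nu u v a) :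
    ∃ C θ ρ : ℝ, 0 < C ∧ 0 < θ ∧ 0 < ρ ∧
      (∀ l k : ℕ, kval l ≤ k →
        ‖a k l‖ ≤ C * θ ^ l * ρ ^ k * ((k - kval l + 1 : ℕ) : ℝ) ^ (α/2 - 1) *
          ((max l 1 : ℕ) : ℝ) ^ (α/2 - 1)) ∧
      ∃ R : ℝ, 0 < R ∧ ∀ t : ℝ, 0 < t → t < R →
        Summable fun p : ℕ × ℕ => ‖a p.1 p.2‖ * t ^ (α * (p.1:ℝ) - (p.2:ℝ)) := by
  obtain ⟨h10, h11, h12, h1l, hzero, hrec⟩ := ha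
  set M : ℝ := 3/(α-1) with hMdef
  have hM0 : 0 < M := by rw [hMdef]; exact div_pos (by norm_num) (by linarith)
  set C : ℝ := 4*(1 + ‖a 1 0‖ + ‖a 1 1‖ + ‖a 1 2‖) with hCdef
  have hC0 : 0 < C := by positivity
  set r : ℝ := max 1 (4*M*(‖mu‖ + 80*‖lam‖*C)) with hrdef
  have hr1 : (1:ℝ) ≤ r := le_max_left _ _
  have hr0 : (0:ℝ) < r := by linarith
  have hrge : 4*M*(‖mu‖ + 80*‖lam‖*C) ≤ r := le_max_right _ _
  -- the key weighted geometric bound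
  have key : ∀ k l : ℕ, ‖a k l‖ ≤ C * r^k / ((k:ℝ)^2 * ((max l 1:ℕ):ℝ)^2) := by
    intro k
    induction k using Nat.strong_induction_on with
    | _ k IH =>
      intro l
      have hW1 : (1:ℝ) ≤ ((max l 1:ℕ):ℝ)^2 := by
        have : (1:ℝ) ≤ ((max l 1:ℕ):ℝ) := by exact_mod_cast le_max_right l 1
        nlinarith
      have hW0 : (0:ℝ) < ((max l 1:ℕ):ℝ)^2 := by linarith
      rcases Nat.lt_or_ge k 2 with hk | hk2
      · interval_cases k
        · rw [hzero 0 l (by have := kval_pos l; omega)]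
          simp
        · -- k = 1
          have hnorm : ∀ j : ℕ, j ≤ 2 → ‖a 1 j‖ ≤ C/4 := by
            intro j hj
            have n0 := norm_nonneg (a 1 0); have n1 := norm_nonneg (a 1 1)
            have n2 := norm_nonneg (a 1 2)
            interval_cases j <;> (rw [hCdef]; linarith)
          rcases Nat.lt_or_ge l 3 with hl | hl
          · have hb := hnorm l (by omega)
            have hW4 : ((max l 1:ℕ):ℝ)^2 ≤ 4 := by
              have : max l 1 ≤ 2 := by omega
              have : ((max l 1:ℕ):ℝ) ≤ 2 := by exact_mod_cast this
              nlinarith [hW1]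
            have h1 : C * r^1 / ((1:ℕ):ℝ)^2 / ((max l 1:ℕ):ℝ)^2 = C*r/((max l 1:ℕ):ℝ)^2 := by
              norm_num
            calc ‖a 1 l‖ ≤ C/4 := hb
              _ ≤ C*r/((max l 1:ℕ):ℝ)^2 := by
                  rw [div_le_div_iff₀ (by norm_num) hW0]
                  nlinarith
              _ = C * r^1 / (((1:ℕ):ℝ)^2 * ((max l 1:ℕ):ℝ)^2) := by
                  push_cast; rw [pow_one]; ring_nf
          · rw [h1l l hl]
            simp only [norm_zero]
            positivity
      · -- k ≥ 2
        rcases Nat.lt_or_ge k (kval l) with hkv | hkv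
        · rw [hzero k l hkv]; simp only [norm_zero]; positivity
        · have hmax : max (kval l) 2 ≤ k := by omega
          rw [hrec l k hmax]
          set m := k - 1 with hmdef
          have hm1 : 1 ≤ m := by omega
          have hmk : m < k := by omega
          have hD1 : (1:ℝ) ≤ (m:ℝ) := by exact_mod_cast hm1
          have hD0 : (0:ℝ) < (m:ℝ) := by linarith
          have hcastm : ((m:ℕ):ℝ) = (k:ℝ) - 1 := by
            rw [hmdef]; push_cast [Nat.cast_sub (by omega : 1 ≤ k)]; ring
          have hE : (k:ℝ) = (m:ℝ) + 1 := by rw [hcastm]; ring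
          -- bound the convolution
          have hconv : ‖dconv a m l‖ ≤
              C^2 * r^m * ((8/(m:ℝ)^2) * (10/((max l 1:ℕ):ℝ)^2)) := by
            have hterm : ∀ k₁ ∈ Finset.Ico 1 m, ∀ l₁ ∈ Finset.range (l+1),
                ‖a k₁ l₁ * a (m - k₁) (l - l₁)‖ ≤
                (C^2 * r^m) * ((1/((k₁:ℝ)^2 * ((m - k₁:ℕ):ℝ)^2)) *
                  (1/(((max l₁ 1:ℕ):ℝ)^2 * ((max (l - l₁) 1:ℕ):ℝ)^2))) := by
              intro k₁ hk₁ l₁ hl₁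
              simp only [Finset.mem_Ico] at hk₁
              have e1 := IH k₁ (by omega) l₁
              have e2 := IH (m - k₁) (by omega) (l - l₁)
              have hrpow : r^k₁ * r^(m - k₁) = r^m := by
                rw [← pow_add]; congr 1; omega
              have hb2nn : (0:ℝ) ≤ C * r^(m-k₁) / (((m-k₁:ℕ):ℝ)^2 * ((max (l-l₁) 1:ℕ):ℝ)^2) := by
                positivity
              calc ‖a k₁ l₁ * a (m - k₁) (l - l₁)‖
                  = ‖a k₁ l₁‖ * ‖a (m - k₁) (l - l₁)‖ := norm_mul _ _
                _ ≤ (C * r^k₁ / ((k₁:ℝ)^2 * ((max l₁ 1:ℕ):ℝ)^2)) *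
                    (C * r^(m-k₁) / (((m-k₁:ℕ):ℝ)^2 * ((max (l-l₁) 1:ℕ):ℝ)^2)) :=
                    mul_le_mul e1 e2 (norm_nonneg _) (by positivity)
                _ = (C^2 * r^m) * ((1/((k₁:ℝ)^2 * ((m - k₁:ℕ):ℝ)^2)) *
                    (1/(((max l₁ 1:ℕ):ℝ)^2 * ((max (l - l₁) 1:ℕ):ℝ)^2))) := by
                    rw [div_mul_div_comm]
                    rw [show C * r ^ k₁ * (C * r ^ (m - k₁)) = C^2 * (r^k₁ * r^(m-k₁)) by ring,
                        hrpow]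
                    ring
            calc ‖dconv a m l‖
                ≤ ∑ k₁ ∈ Finset.Ico 1 m, ∑ l₁ ∈ Finset.range (l+1),
                    (C^2 * r^m) * ((1/((k₁:ℝ)^2 * ((m - k₁:ℕ):ℝ)^2)) *
                    (1/(((max l₁ 1:ℕ):ℝ)^2 * ((max (l - l₁) 1:ℕ):ℝ)^2))) := by
                  refine le_trans (norm_sum_le _ _) (Finset.sum_le_sum fun k₁ hk₁ => ?_)
                  exact le_trans (norm_sum_le _ _)
                    (Finset.sum_le_sum fun l₁ hl₁ => hterm k₁ hk₁ l₁ hl₁)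
              _ = (C^2 * r^m) * ((∑ k₁ ∈ Finset.Ico 1 m, (1:ℝ)/((k₁:ℝ)^2 * ((m - k₁:ℕ):ℝ)^2)) *
                    (∑ l₁ ∈ Finset.range (l+1),
                      (1:ℝ)/(((max l₁ 1:ℕ):ℝ)^2 * ((max (l - l₁) 1:ℕ):ℝ)^2))) := by
                  rw [Finset.sum_mul_sum, Finset.mul_sum]
                  exact Finset.sum_congr rfl fun k₁ _ => by rw [Finset.mul_sum]
              _ ≤ (C^2 * r^m) * ((8/(m:ℝ)^2) * (10/((max l 1:ℕ):ℝ)^2)) := by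
                  apply mul_le_mul_of_nonneg_left _ (by positivity)
                  apply mul_le_mul (sumk m) (suml l)
                    (Finset.sum_nonneg fun _ _ => by positivity) (by positivity)
              _ = C^2 * r^m * ((8/(m:ℝ)^2) * (10/((max l 1:ℕ):ℝ)^2)) := by ring
          -- bound the recursion term
          have hmu : ‖a m l‖ ≤ C * r^m / ((m:ℝ)^2 * ((max l 1:ℕ):ℝ)^2) := IH m hmk l
          have hratio : ‖((Real.Gamma (α * ((k:ℝ) - 1) - (l:ℝ) + 1) /
              Real.Gamma (α * (k:ℝ) - (l:ℝ) + 1) : ℝ) : ℂ)‖ ≤ M := by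
            rw [Complex.norm_real]
            exact ratio_bound hα hα2 l k hmax
          have hratio0 : (0:ℝ) ≤ ‖((Real.Gamma (α * ((k:ℝ) - 1) - (l:ℝ) + 1) /
              Real.Gamma (α * (k:ℝ) - (l:ℝ) + 1) : ℝ) : ℂ)‖ := norm_nonneg _
          calc ‖(mu * a m l + lam * dconv a m l) *
                ((Real.Gamma (α * ((k:ℝ) - 1) - (l:ℝ) + 1) /
                  Real.Gamma (α * (k:ℝ) - (l:ℝ) + 1) : ℝ) : ℂ)‖
              = ‖mu * a m l + lam * dconv a m l‖ *
                ‖((Real.Gamma (α * ((k:ℝ) - 1) - (l:ℝ) + 1) /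
                  Real.Gamma (α * (k:ℝ) - (l:ℝ) + 1) : ℝ) : ℂ)‖ := norm_mul _ _
            _ ≤ (‖mu‖ * (C * r^m / ((m:ℝ)^2 * ((max l 1:ℕ):ℝ)^2)) +
                  ‖lam‖ * (C^2 * r^m * ((8/(m:ℝ)^2) * (10/((max l 1:ℕ):ℝ)^2)))) * M := by
                apply mul_le_mul _ hratio hratio0 _
                · calc ‖mu * a m l + lam * dconv a m l‖
                      ≤ ‖mu * a m l‖ + ‖lam * dconv a m l‖ := norm_add_le _ _
                    _ = ‖mu‖ * ‖a m l‖ + ‖lam‖ * ‖dconv a m l‖ := by rw [norm_mul, norm_mul]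
                    _ ≤ _ := by
                        apply add_le_add
                        · exact mul_le_mul_of_nonneg_left hmu (norm_nonneg _)
                        · exact mul_le_mul_of_nonneg_left hconv (norm_nonneg _)
                · positivity
            _ = ((‖mu‖*C + 80*‖lam‖*C^2) * M * r^m) / ((m:ℝ)^2 * ((max l 1:ℕ):ℝ)^2) := by
                field_simp
                ring
            _ ≤ C * r^k / ((k:ℝ)^2 * ((max l 1:ℕ):ℝ)^2) := by
                have hrk : r^k = r^m * r := by
                  rw [← pow_succ]; congr 1; omega
                rw [hrk, hE, div_le_div_iff₀ (by positivity) (by positivity)]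
                have hE2 : ((m:ℝ)+1)^2 ≤ 4*(m:ℝ)^2 := by nlinarith
                have hrm0 : (0:ℝ) < r^m := by positivity
                calc (‖mu‖*C + 80*‖lam‖*C^2) * M * r^m * (((m:ℝ)+1)^2 * ((max l 1:ℕ):ℝ)^2)
                    ≤ (‖mu‖*C + 80*‖lam‖*C^2) * M * r^m * ((4*(m:ℝ)^2) * ((max l 1:ℕ):ℝ)^2) := by
                      apply mul_le_mul_of_nonneg_left _ (by positivity)
                      exact mul_le_mul_of_nonneg_right hE2 (by positivity)
                  _ = (C * (4*M*(‖mu‖ + 80*‖lam‖*C))) * r^m * ((m:ℝ)^2 * ((max l 1:ℕ):ℝ)^2) := by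
                      ring
                  _ ≤ (C * r) * r^m * ((m:ℝ)^2 * ((max l 1:ℕ):ℝ)^2) := by
                      apply mul_le_mul_of_nonneg_right _ (by positivity)
                      apply mul_le_mul_of_nonneg_right _ (by positivity)
                      exact mul_le_mul_of_nonneg_left hrge hC0.le
                  _ = C * (r^m * r) * ((m:ℝ)^2 * ((max l 1:ℕ):ℝ)^2) := by ring
  -- simple geometric consequence
  have hCr : ∀ k l : ℕ, kval l ≤ k → ‖a k l‖ ≤ C * r^k := by
    intro k l hkl
    have hk1 : 1 ≤ k := le_trans (kval_pos l) hkl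
    have hk1R : (1:ℝ) ≤ (k:ℝ) := by exact_mod_cast hk1
    have hW1 : (1:ℝ) ≤ ((max l 1:ℕ):ℝ)^2 := by
      have : (1:ℝ) ≤ ((max l 1:ℕ):ℝ) := by exact_mod_cast le_max_right l 1
      nlinarith
    calc ‖a k l‖ ≤ C * r^k / ((k:ℝ)^2 * ((max l 1:ℕ):ℝ)^2) := key k l
      _ ≤ C * r^k := by
          apply div_le_self (by positivity)
          nlinarith
  refine ⟨C, 2, 2*r, hC0, by norm_num, by positivity, ?_, ?_⟩
  · -- the main estimate
    intro l k hkl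
    have hk1 : 1 ≤ k := le_trans (kval_pos l) hkl
    have e1 : 1 ≤ (2:ℝ)^k * ((k - kval l + 1 : ℕ):ℝ)^(α/2-1) := by
      apply pow_rpow_ge_one hα hα2 k _ (by omega)
      have h1 : k - kval l + 1 ≤ 2^k := by
        have h2 : k - kval l + 1 ≤ k := by have := kval_pos l; omega
        have h3 : k ≤ 2^k := Nat.le_of_lt (Nat.lt_two_pow_self (n := k))
        omega
      have : ((k - kval l + 1 : ℕ):ℝ) ≤ ((2:ℕ)^k : ℝ) := by exact_mod_cast h1
      calc ((k - kval l + 1 : ℕ):ℝ) ≤ ((2:ℕ)^k : ℝ) := this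
        _ ≤ ((2:ℝ)^k)^2 := by
            push_cast
            nlinarith [pow_pos (by norm_num : (0:ℝ) < 2) k, one_le_pow₀ (by norm_num : (1:ℝ) ≤ 2) (n := k)]
    have e2 : 1 ≤ (2:ℝ)^l * ((max l 1 : ℕ):ℝ)^(α/2-1) := by
      apply pow_rpow_ge_one hα hα2 l _ (by omega)
      have h1 : max l 1 ≤ 2^l := by
        have h3 : l ≤ 2^l := Nat.le_of_lt (Nat.lt_two_pow_self (n := l))
        have h4 : 1 ≤ 2^l := Nat.one_le_two_pow
        omega
      have : ((max l 1 : ℕ):ℝ) ≤ ((2:ℕ)^l : ℝ) := by exact_mod_cast h1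
      calc ((max l 1 : ℕ):ℝ) ≤ ((2:ℕ)^l : ℝ) := this
        _ ≤ ((2:ℝ)^l)^2 := by
            push_cast
            nlinarith [pow_pos (by norm_num : (0:ℝ) < 2) l, one_le_pow₀ (by norm_num : (1:ℝ) ≤ 2) (n := l)]
    calc ‖a k l‖ ≤ C * r^k := hCr k l hkl
      _ = C * r^k * (1 * 1) := by ring
      _ ≤ C * r^k * (((2:ℝ)^k * ((k - kval l + 1 : ℕ):ℝ)^(α/2-1)) *
            ((2:ℝ)^l * ((max l 1 : ℕ):ℝ)^(α/2-1))) := by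
          apply mul_le_mul_of_nonneg_left _ (by positivity)
          exact mul_le_mul e1 e2 (by norm_num) (by positivity)
      _ = C * 2^l * (2*r)^k * ((k - kval l + 1 : ℕ):ℝ)^(α/2-1) * ((max l 1 : ℕ):ℝ)^(α/2-1) := by
          rw [mul_pow]; ring
  · -- summability
    refine ⟨min 1 ((4*r)⁻¹ ^ (α-1)⁻¹), lt_min one_pos (Real.rpow_pos_of_pos (by positivity) _), ?_⟩
    intro t ht htR
    have ht1 : t < 1 := lt_of_lt_of_le htR (min_le_left _ _)
    have hta : t^(α-1) ≤ (4*r)⁻¹ := by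
      have h1 : t ≤ ((4*r)⁻¹ ^ (α-1)⁻¹) := le_of_lt (lt_of_lt_of_le htR (min_le_right _ _))
      have h2 := Real.rpow_le_rpow ht.le h1 (by linarith : (0:ℝ) ≤ α-1)
      rwa [Real.rpow_inv_rpow (by positivity) (by intro h; linarith [h] : α-1 ≠ 0)] at h2
    have hq : r * t^(α-1) ≤ 1/4 := by
      calc r * t^(α-1) ≤ r * (4*r)⁻¹ :=
            mul_le_mul_of_nonneg_left hta hr0.le
        _ = 1/4 := by field_simp
    have hq0 : (0:ℝ) ≤ r * t^(α-1) := by positivity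
    -- the majorant
    have hsum : Summable (fun p : ℕ × ℕ =>
        (4*C*t^((-2):ℝ)) * ((1/2:ℝ)^p.1 * (1/2:ℝ)^p.2)) := by
      apply Summable.mul_left
      exact (summable_geometric_of_lt_one (by norm_num) (by norm_num)).mul_of_nonneg
        (summable_geometric_of_lt_one (by norm_num) (by norm_num))
        (fun n => by positivity) (fun n => by positivity)
    apply Summable.of_nonneg_of_le (fun p => by positivity) _ hsum
    rintro ⟨k, l⟩
    rcases Nat.lt_or_ge k (kval l) with hkv | hkv
    · rw [hzero k l hkv]
      simp only [norm_zero, zero_mul]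
      positivity
    · have hlk : l ≤ k + 2 := by
        unfold kval at hkv
        rcases le_or_gt l 2 with h | h
        · omega
        · simp only [if_neg (by omega : ¬ l ≤ 2)] at hkv; omega
      have hexp : (α-1)*(k:ℝ) - 2 ≤ α*(k:ℝ) - (l:ℝ) := by
        have : (l:ℝ) ≤ (k:ℝ) + 2 := by exact_mod_cast hlk
        nlinarith
      have texp : t^(α*(k:ℝ) - (l:ℝ)) ≤ t^((α-1)*(k:ℝ) - 2) :=
        Real.rpow_le_rpow_of_exponent_ge ht ht1.le hexp
      have teq : t^((α-1)*(k:ℝ) - 2) = (t^(α-1))^k * t^((-2):ℝ) := by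
        rw [show (α-1)*(k:ℝ) - 2 = (α-1)*(k:ℝ) + (-2) by ring, Real.rpow_add ht,
            Real.rpow_mul ht.le, Real.rpow_natCast]
      have hhalf : ((1:ℝ)/2)^k ≤ 4 * ((1:ℝ)/2)^l := by
        have h2l : (2:ℝ)^l ≤ 4 * 2^k := by
          have : (2:ℕ)^l ≤ 4 * 2^k := by
            calc (2:ℕ)^l ≤ 2^(k+2) := Nat.pow_le_pow_right (by norm_num) hlk
              _ = 4 * 2^k := by ring
          exact_mod_cast this
        have hk0 : (0:ℝ) < 2^k := by positivity
        have hl0 : (0:ℝ) < 2^l := by positivity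
        rw [div_pow, div_pow, one_pow, one_pow, div_le_iff₀ hk0,
            show (4:ℝ)*(1/2^l)*2^k = (4*2^k)/2^l by ring, le_div_iff₀ hl0]
        linarith
      calc ‖a k l‖ * t^(α*(k:ℝ) - (l:ℝ))
          ≤ (C * r^k) * ((t^(α-1))^k * t^((-2):ℝ)) := by
            apply mul_le_mul (hCr k l hkv) (le_trans texp (le_of_eq teq))
              (Real.rpow_nonneg ht.le _) (by positivity)
        _ = (C * t^((-2):ℝ)) * (r * t^(α-1))^k := by rw [mul_pow]; ring
        _ ≤ (C * t^((-2):ℝ)) * ((1/4:ℝ))^k := by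
            apply mul_le_mul_of_nonneg_left _ (by positivity)
            exact pow_le_pow_left₀ hq0 (by linarith) k
        _ = (C * t^((-2):ℝ)) * ((1/2:ℝ)^k * (1/2:ℝ)^k) := by
            rw [← mul_pow]; norm_num
        _ ≤ (C * t^((-2):ℝ)) * ((1/2:ℝ)^k * (4 * (1/2:ℝ)^l)) := by
            apply mul_le_mul_of_nonneg_left _ (by positivity)
            exact mul_le_mul_of_nonneg_left hhalf (by positivity)
        _ = (4*C*t^((-2):ℝ)) * ((1/2:ℝ)^k * (1/2:ℝ)^l) := by ring
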